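/- arXiv:1610.01438 — 4 statements merged into one kernel-verified Lean document; each statement's English description precedes it below -/
import Mathlib

section
/- Let C ⊆ ℤ be a symmetric set (n ∈ C implies −n ∈ C) containing 0 that is not syndetic. Then there exists a strictly increasing sequence of positive integers (h_i) with h_{i+1} ≥ 2 h_i such that, defining D_m = {c_1 h_1 + c_2 h_2 + ⋯ + c_m h_m : c_i ∈ {−1,0,1}}, one has C ∩ D_m = {0} for all m ∈ ℕ. -/
/-- `C ⊆ ℤ` is syndetic if there is `N > 0` such that every interval of length `N` meets `C`. -/
def IsSyndetic (C : Set ℤ) : Prop :=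
  ∃ N : ℤ, 0 < N ∧ ∀ a : ℤ, ∃ c ∈ C, c ∈ Set.Ico a (a + N)

/-- `D h m = {c 1 * h 1 + ⋯ + c m * h m : c i ∈ {-1,0,1}}`, the iterated sumset
`{-h 1,0,h 1} ⊕ ⋯ ⊕ {-h m,0,h m}` (indices `1,…,m`). -/
def D (h : ℕ → ℤ) (m : ℕ) : Set ℤ :=
  {x : ℤ | ∃ c : ℕ → ℤ, (∀ i, c i ∈ ({-1, 0, 1} : Set ℤ)) ∧
    x = ∑ i ∈ Finset.Icc 1 m, c i * h i}

theorem exists_skyscraper_heights_avoiding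
    (C : Set ℤ) (hsym : ∀ n ∈ C, -n ∈ C) (h0 : (0 : ℤ) ∈ C) (hns : ¬ IsSyndetic C) :
    ∃ h : ℕ → ℤ, (∀ i, 0 < h i) ∧ StrictMono h ∧ (∀ i, 2 * h i ≤ h (i + 1)) ∧
      ∀ m : ℕ, C ∩ D h m = {0} := by
  classical
  unfold IsSyndetic at hns
  push_neg at hns
  -- gap lemma: for any n, K there is ℓ > K with C ∩ [ℓ-n, ℓ+n] = ∅
  have gap : ∀ n K : ℤ, ∃ ℓ : ℤ, K < ℓ ∧ ∀ c ∈ C, c ∉ Set.Icc (ℓ - n) (ℓ + n) := by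
    intro n K
    set n' : ℤ := max n 0 with hn'
    set K' : ℤ := max K 0 with hK'
    have hn'0 : 0 ≤ n' := le_max_right _ _
    have hK'0 : 0 ≤ K' := le_max_right _ _
    set N : ℤ := 2 * n' + K' + 1 with hN
    have hNpos : 0 < N := by omega
    obtain ⟨a, ha⟩ := hns N hNpos
    -- get a gap interval [b, b+N) with b ≥ 1
    have key : ∃ b : ℤ, 1 ≤ b ∧ ∀ c ∈ C, c ∉ Set.Ico b (b + N) := by
      by_cases hb : 1 ≤ a
      · exact ⟨a, hb, ha⟩
      · have h0a : (0 : ℤ) ∉ Set.Ico a (a + N) := ha 0 h0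
        have haN : a + N ≤ 0 := by
          simp only [Set.mem_Ico] at h0a
          omega
        refine ⟨1 - a - N, by omega, ?_⟩
        intro c hc hmem
        simp only [Set.mem_Ico] at hmem
        have : -c ∈ Set.Ico a (a + N) := by
          simp only [Set.mem_Ico]; omega
        exact ha (-c) (hsym c hc) this
    obtain ⟨b, hb1, hbgap⟩ := key
    refine ⟨b + n' + K', by omega, ?_⟩
    intro c hc hmem
    simp only [Set.mem_Icc] at hmem
    have hnn' : n ≤ n' := le_max_left _ _
    have : c ∈ Set.Ico b (b + N) := by
      simp only [Set.mem_Ico]; omega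
    exact hbgap c hc this
  choose F hF1 hF2 using gap
  -- recursive construction: g n = (h n, S n) with S n = ∑_{i=1}^n h i
  let g : ℕ → ℤ × ℤ := fun m => Nat.rec ((1 : ℤ), (0 : ℤ))
    (fun _ p => (F p.2 (2 * p.1 + p.2), p.2 + F p.2 (2 * p.1 + p.2))) m
  have hg0 : g 0 = (1, 0) := rfl
  have hgs : ∀ n, g (n + 1) =
      (F (g n).2 (2 * (g n).1 + (g n).2), (g n).2 + F (g n).2 (2 * (g n).1 + (g n).2)) :=
    fun n => rfl
  have hstep : ∀ n, 2 * (g n).1 + (g n).2 < (g (n + 1)).1 := by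
    intro n; rw [hgs n]; exact hF1 _ _
  have havoid : ∀ n, ∀ c ∈ C,
      c ∉ Set.Icc ((g (n + 1)).1 - (g n).2) ((g (n + 1)).1 + (g n).2) := by
    intro n c hc
    rw [hgs n]
    exact hF2 _ _ c hc
  have hpos : ∀ n, 0 < (g n).1 ∧ 0 ≤ (g n).2 := by
    intro n
    induction n with
    | zero => rw [hg0]; norm_num
    | succ n ih =>
      have h1 := hstep n
      have h2 : (g (n + 1)).2 = (g n).2 + (g (n + 1)).1 := by rw [hgs n]
      constructor
      · omega
      · omega
  have hS : ∀ n, (g n).2 = ∑ i ∈ Finset.Icc 1 n, (g i).1 := by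
    intro n
    induction n with
    | zero => rw [hg0]; simp
    | succ n ih =>
      have h2 : (g (n + 1)).2 = (g n).2 + (g (n + 1)).1 := by rw [hgs n]
      rw [h2, ih, Finset.sum_Icc_succ_top (by omega : 1 ≤ n + 1)]
  let h : ℕ → ℤ := fun n => (g n).1
  have hhe : ∀ n, h n = (g n).1 := fun _ => rfl
  have hdouble : ∀ n, 2 * h n ≤ h (n + 1) := by
    intro n
    have := hstep n
    have := (hpos n).2
    rw [hhe n, hhe (n + 1)]
    omega
  have hposh : ∀ n, 0 < h n := fun n => (hpos n).1
  have hbound : ∀ m (c : ℕ → ℤ), (∀ i, c i ∈ ({-1, 0, 1} : Set ℤ)) →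
      |∑ i ∈ Finset.Icc 1 m, c i * h i| ≤ (g m).2 := by
    intro m c hc
    rw [hS]
    calc |∑ i ∈ Finset.Icc 1 m, c i * h i| ≤ ∑ i ∈ Finset.Icc 1 m, |c i * h i| :=
          Finset.abs_sum_le_sum_abs _ _
      _ ≤ ∑ i ∈ Finset.Icc 1 m, (g i).1 := by
          apply Finset.sum_le_sum
          intro i _
          have hci : |c i| ≤ 1 := by
            have := hc i
            simp only [Set.mem_insert_iff, Set.mem_singleton_iff] at this
            rcases this with h' | h' | h' <;> simp [h']
          have hpi := (hpos i).1
          calc |c i * h i| = |c i| * |h i| := abs_mul _ _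
            _ ≤ 1 * |h i| := by
                apply mul_le_mul_of_nonneg_right hci (abs_nonneg _)
            _ = (g i).1 := by rw [one_mul, abs_of_pos hpi]
  refine ⟨h, hposh, strictMono_nat_of_lt_succ (fun n => by have := hdouble n; have := hposh n; omega),
    hdouble, ?_⟩
  intro m
  induction m with
  | zero =>
    ext x
    simp only [Set.mem_inter_iff, Set.mem_singleton_iff, D, Set.mem_setOf_eq]
    constructor
    · rintro ⟨hx, c, hc, rfl⟩
      simp
    · rintro rfl
      exact ⟨h0, fun _ => 0, fun i => by simp, by simp⟩
  | succ m ih =>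
    ext x
    simp only [Set.mem_inter_iff, Set.mem_singleton_iff, D, Set.mem_setOf_eq]
    constructor
    · rintro ⟨hxC, c, hc, rfl⟩
      rw [Finset.sum_Icc_succ_top (by omega : 1 ≤ m + 1)] at hxC ⊢
      have hdb := abs_le.mp (hbound m c hc)
      have hcm := hc (m + 1)
      simp only [Set.mem_insert_iff, Set.mem_singleton_iff] at hcm
      have havoid' : ∀ y ∈ C, ¬(h (m + 1) - (g m).2 ≤ y ∧ y ≤ h (m + 1) + (g m).2) := by
        intro y hy hmem
        exact havoid m y hy (Set.mem_Icc.mpr (by exact hmem))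
      rcases hcm with h' | h' | h'
      · exfalso
        refine havoid' _ (hsym _ hxC) ?_
        rw [h']
        omega
      · rw [h', zero_mul, add_zero] at hxC ⊢
        have hmem : (∑ i ∈ Finset.Icc 1 m, c i * h i) ∈ C ∩ D h m := ⟨hxC, c, hc, rfl⟩
        rw [ih] at hmem
        exact hmem
      · exfalso
        refine havoid' _ hxC ?_
        rw [h']
        omega
    · rintro rfl
      exact ⟨h0, fun _ => 0, fun i => by simp, by simp⟩
end

section
/- Let T be an invertible measure-preserving ergodic transformation of a σ-finite infinite measure space (X, μ), let A* be a measurable set with 0 < μ(A*) < ∞, and fix 0 < ε < μ(A*). Then there exists a measurable A ⊆ A* with μ(A) > μ(A*) − ε such that the conservative sequence C_T(A) = {n ∈ ℤ : μ(Tⁿ A ∩ A) > 0} is not syndetic. -/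
open MeasureTheory Filter Function
open scoped ENNReal

section Aux

variable {X : Type*} [MeasurableSpace X] {μ : Measure X}


variable {X : Type*} [MeasurableSpace X] {μ : Measure X}

lemma koopman_fixed_eq_zero (hinf : μ Set.univ = ⊤)
    {T : X → X} (hT : MeasurePreserving T μ μ) (herg : Ergodic T μ)
    (h : Lp ℝ 2 μ) (hfix : Lp.compMeasurePreserving T hT h = h) : h = 0 := by
  have h1 : ⇑h ∘ T =ᵐ[μ] ⇑h := by
    have h2 := Lp.coeFn_compMeasurePreserving h hT
    rw [hfix] at h2
    exact h2.symm
  obtain ⟨c, hc⟩ := herg.ae_eq_const_of_ae_eq_comp₀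
    ((Lp.aestronglyMeasurable h).aemeasurable.nullMeasurable) h1
  have hm : MemLp (fun _ : X => c) 2 μ := (Lp.memLp h).ae_eq hc
  rcases (memLp_const_iff (by norm_num) (by norm_num)).mp hm with rfl | hlt
  · exact Lp.eq_zero_iff_ae_eq_zero.mpr hc
  · rw [hinf] at hlt; exact absurd hlt (lt_irrefl _)

lemma cesaro (hinf : μ Set.univ = ⊤)
    {T : X → X} (hT : MeasurePreserving T μ μ) (herg : Ergodic T μ)
    {A : Set X} (hA : MeasurableSet A) (hAfin : μ A ≠ ⊤) :
    Tendsto (fun N : ℕ => (N : ℝ)⁻¹ * ∑ n ∈ Finset.range N, (μ (A ∩ T^[n] ⁻¹' A)).toReal)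
      atTop (nhds 0) := by
  haveI : Fact ((1:ℝ≥0∞) ≤ 2) := ⟨one_le_two⟩
  set U := ((Lp.compMeasurePreservingₗᵢ ℝ T hT : Lp ℝ 2 μ →ₗᵢ[ℝ] Lp ℝ 2 μ)).toContinuousLinearMap with hUdef
  have hUapp : ∀ g : Lp ℝ 2 μ, U g = Lp.compMeasurePreserving T hT g := fun g => rfl
  set f : Lp ℝ 2 μ := indicatorConstLp 2 hA hAfin (1:ℝ) with hfdef
  have hmean := ContinuousLinearMap.tendsto_birkhoffAverage_orthogonalProjection (𝕜 := ℝ) U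
    ((Lp.compMeasurePreservingₗᵢ ℝ T hT : Lp ℝ 2 μ →ₗᵢ[ℝ] Lp ℝ 2 μ).norm_toContinuousLinearMap_le) f
  have hproj : (((U.eqLocus (1 : Lp ℝ 2 μ →L[ℝ] Lp ℝ 2 μ)).orthogonalProjectionOnto f : _) : Lp ℝ 2 μ) = 0 := by
    have hmem := ((U.eqLocus (1 : Lp ℝ 2 μ →L[ℝ] Lp ℝ 2 μ)).orthogonalProjectionOnto f).2
    rw [LinearMap.mem_eqLocus] at hmem
    exact koopman_fixed_eq_zero hinf hT herg _ hmem
  rw [hproj] at hmean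
  -- identify the iterates with indicators
  have hmeas : ∀ n : ℕ, MeasurableSet (T^[n] ⁻¹' A) :=
    fun n => hA.preimage (hT.iterate n).measurable
  have hiter : ∀ n : ℕ, ⇑((⇑U)^[n] f) =ᵐ[μ] (T^[n] ⁻¹' A).indicator (fun _ => (1:ℝ)) := by
    intro n
    induction n with
    | zero =>
      simpa using indicatorConstLp_coeFn (p := 2) (hs := hA) (hμs := hAfin) (c := (1:ℝ))
    | succ n ih =>
      rw [Function.iterate_succ_apply']
      have h1 : ⇑(U ((⇑U)^[n] f)) =ᵐ[μ] ⇑((⇑U)^[n] f) ∘ T := by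
        rw [hUapp]; exact Lp.coeFn_compMeasurePreserving _ hT
      refine h1.trans ?_
      have h2 : ⇑((⇑U)^[n] f) ∘ T =ᵐ[μ] ((T^[n] ⁻¹' A).indicator (fun _ => (1:ℝ))) ∘ T :=
        hT.quasiMeasurePreserving.ae_eq_comp ih
      refine h2.trans (Eventually.of_forall fun x => ?_)
      have hpre : T^[n+1] ⁻¹' A = T ⁻¹' (T^[n] ⁻¹' A) := by
        rw [Function.iterate_succ, Set.preimage_comp]
      by_cases hx : T^[n] (T x) ∈ A <;>
        simp [hpre, Set.indicator, Set.mem_preimage, Function.comp_apply, hx]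
  -- compute the inner products
  have hinner : ∀ n : ℕ, (inner ℝ f ((⇑U)^[n] f) : ℝ) = (μ (A ∩ T^[n] ⁻¹' A)).toReal := by
    intro n
    rw [L2.inner_indicatorConstLp_eq_setIntegral_inner (𝕜 := ℝ) _ hA _ hAfin]
    have : ∀ᵐ x ∂(μ.restrict A), (inner ℝ (1:ℝ) (((⇑U)^[n] f) x) : ℝ)
        = (T^[n] ⁻¹' A).indicator (fun _ => (1:ℝ)) x := by
      filter_upwards [ae_restrict_of_ae (hiter n)] with x hx
      rw [hx, RCLike.inner_apply]
      simp
    rw [integral_congr_ae this, setIntegral_indicator (hmeas n), setIntegral_const]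
    simp [Set.inter_comm, Measure.real]
  -- put it together
  have key : Tendsto (fun N : ℕ => (inner ℝ f (birkhoffAverage ℝ (⇑U) _root_.id N f) : ℝ))
      atTop (nhds 0) := by
    have := Filter.Tendsto.inner (𝕜 := ℝ) (tendsto_const_nhds (x := f)) hmean
    simpa using this
  refine key.congr (fun N => ?_)
  rw [birkhoffAverage, birkhoffSum, real_inner_smul_right, inner_sum]
  simp only [id_eq]
  rw [Finset.sum_congr rfl (fun n _ => hinner n)]

lemma window_aux {a : ℕ → ℝ} 
    (hces : Tendsto (fun N : ℕ => (N : ℝ)⁻¹ * ∑ n ∈ Finset.range N, a n) atTop (nhds 0))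
    {L : ℕ} (hL : 0 < L) {δ : ℝ} (hδ : 0 < δ) :
    ∃ ℓ : ℕ, ∑ j ∈ Finset.Ico ℓ (ℓ + L), a j < δ := by
  by_contra hcon
  push_neg at hcon
  have hblock : ∀ t : ℕ, (t : ℝ) * δ ≤ ∑ j ∈ Finset.range (t * L), a j := by
    intro t
    induction t with
    | zero => simp
    | succ t ih =>
      have hsplit : ∑ j ∈ Finset.range (t * L), a j + ∑ j ∈ Finset.Ico (t * L) (t * L + L), a j
          = ∑ j ∈ Finset.range ((t + 1) * L), a j := by
        simp only [Finset.range_eq_Ico]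
        rw [Finset.sum_Ico_consecutive _ (Nat.zero_le _) (Nat.le_add_right _ _)]
        congr 2
        ring
      push_cast
      rw [← hsplit]
      have := hcon (t * L)
      linarith
  have hL' : (0:ℝ) < L := by exact_mod_cast hL
  have hmul : Tendsto (fun t : ℕ => t * L) atTop atTop :=
    tendsto_atTop_atTop.mpr fun b => ⟨b, fun t ht => le_trans ht (Nat.le_mul_of_pos_right t hL)⟩
  have hsub : Tendsto
      (fun t : ℕ => (((t * L : ℕ) : ℝ))⁻¹ * ∑ n ∈ Finset.range (t * L), a n) atTop (nhds 0) :=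
    hces.comp hmul
  have hev : ∀ᶠ t : ℕ in atTop,
      δ / L ≤ (((t * L : ℕ) : ℝ))⁻¹ * ∑ n ∈ Finset.range (t * L), a n := by
    filter_upwards [eventually_ge_atTop 1] with t ht
    have ht' : (0:ℝ) < t := by exact_mod_cast ht
    have hS := hblock t
    have h1 : ((t * L : ℕ) : ℝ) = (t : ℝ) * L := by push_cast; ring
    rw [h1]
    calc δ / L = ((t:ℝ) * L)⁻¹ * ((t:ℝ) * δ) := by field_simp
      _ ≤ ((t:ℝ) * L)⁻¹ * ∑ n ∈ Finset.range (t * L), a n := by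
          apply mul_le_mul_of_nonneg_left hS
          positivity
  have h0 : δ / L ≤ 0 := ge_of_tendsto hsub hev
  exact absurd h0 (not_le.mpr (div_pos hδ hL'))

lemma window (hinf : μ Set.univ = ⊤) {T : X → X} (hT : MeasurePreserving T μ μ)
    (herg : Ergodic T μ) {A : Set X} (hA : MeasurableSet A) (hAfin : μ A ≠ ⊤)
    (L : ℕ) (hL : 0 < L) {δ : ℝ} (hδ : 0 < δ) :
    ∃ ℓ : ℕ, μ (⋃ j ∈ Finset.Ico ℓ (ℓ + L), A ∩ T^[j] ⁻¹' A) < ENNReal.ofReal δ := by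
  obtain ⟨ℓ, hℓ⟩ := window_aux (cesaro hinf hT herg hA hAfin) hL hδ
  refine ⟨ℓ, lt_of_le_of_lt (measure_biUnion_finset_le _ _) ?_⟩
  have hne : ∀ j ∈ Finset.Ico ℓ (ℓ + L), μ (A ∩ T^[j] ⁻¹' A) ≠ ⊤ := fun j _ =>
    ((measure_mono Set.inter_subset_left).trans_lt (lt_top_iff_ne_top.mpr hAfin)).ne
  have hne' : ∑ j ∈ Finset.Ico ℓ (ℓ + L), μ (A ∩ T^[j] ⁻¹' A) ≠ ⊤ := by
    rw [← lt_top_iff_ne_top]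
    exact ENNReal.sum_lt_top.mpr fun j hj => lt_top_iff_ne_top.mpr (hne j hj)
  rw [ENNReal.lt_ofReal_iff_toReal_lt hne', ENNReal.toReal_sum hne]
  exact hℓ

end Aux

theorem exists_subset_with_non_syndetic_conservative_sequence
    {X : Type*} [MeasurableSpace X] (μ : Measure X) [SigmaFinite μ]
    (hinf : μ Set.univ = ⊤) (e : Equiv.Perm X)
    (hT : MeasurePreserving e μ μ) (hT' : MeasurePreserving e.symm μ μ)
    (herg : Ergodic e μ)
    (Astar : Set X) (hAstar : MeasurableSet Astar)
    (hpos : 0 < μ Astar) (hfin : μ Astar < ⊤)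
    (ε : ℝ) (hε0 : 0 < ε) (hε1 : ε < (μ Astar).toReal) :
    ∃ A : Set X, A ⊆ Astar ∧ MeasurableSet A ∧
      (μ Astar).toReal - ε < (μ A).toReal ∧
      ¬ IsSyndetic {n : ℤ | 0 < μ (⇑(e ^ n) '' A ∩ A)} := by
  classical
  have hε4 : (0:ℝ) < ε / 4 := by linarith
  have key : ∀ (k : ℕ) (A : Set X), ∃ ℓ : ℕ, MeasurableSet A → μ A ≠ ⊤ →
      μ (⋃ j ∈ Finset.Ico ℓ (ℓ + (k+1)), A ∩ (⇑e)^[j] ⁻¹' A)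
        < ENNReal.ofReal (ε/4 * (1/2)^k) := by
    intro k A
    by_cases h : MeasurableSet A ∧ μ A ≠ ⊤
    · obtain ⟨ℓ, hℓ⟩ := window hinf hT herg h.1 h.2 (k+1) (Nat.succ_pos k)
        (δ := ε/4 * (1/2)^k) (by positivity)
      exact ⟨ℓ, fun _ _ => hℓ⟩
    · exact ⟨0, fun h1 h2 => absurd ⟨h1, h2⟩ h⟩
  choose F hF using key
  set Bad : ℕ → Set X → Set X :=
    fun k A => ⋃ j ∈ Finset.Ico (F k A) (F k A + (k+1)), A ∩ (⇑e)^[j] ⁻¹' A with hBad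
  set As : ℕ → Set X :=
    fun k => Nat.rec (motive := fun _ => Set X) Astar (fun k Ak => Ak \ Bad k Ak) k with hAs
  have hAsSucc : ∀ k, As (k+1) = As k \ Bad k (As k) := fun k => rfl
  have hAsMeasSub : ∀ k, MeasurableSet (As k) ∧ As k ⊆ Astar := by
    intro k
    induction k with
    | zero => exact ⟨hAstar, subset_rfl⟩
    | succ k ih =>
      refine ⟨ih.1.diff (Finset.measurableSet_biUnion _ fun j _ =>
        ih.1.inter (ih.1.preimage (hT.iterate j).measurable)), ?_⟩
      rw [hAsSucc]
      exact Set.diff_subset.trans ih.2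
  have hAsfin : ∀ k, μ (As k) ≠ ⊤ := fun k => ((measure_mono (hAsMeasSub k).2).trans_lt hfin).ne
  have hBadlt : ∀ k, μ (Bad k (As k)) < ENNReal.ofReal (ε/4 * (1/2)^k) :=
    fun k => hF k (As k) (hAsMeasSub k).1 (hAsfin k)
  set A : Set X := ⋂ k, As k with hAdef
  have hAsub : A ⊆ Astar := (Set.iInter_subset _ 0).trans (hAsMeasSub 0).2
  have hAmeas : MeasurableSet A := MeasurableSet.iInter fun k => (hAsMeasSub k).1
  have hAAs : ∀ k, A ⊆ As k := fun k => Set.iInter_subset _ k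
  -- gap property
  have hgap : ∀ k j, F k (As k) ≤ j → j < F k (As k) + (k+1) → A ∩ (⇑e)^[j] ⁻¹' A = ∅ := by
    intro k j hj1 hj2
    rw [Set.eq_empty_iff_forall_notMem]
    rintro x ⟨hx1, hx2⟩
    have hx' : x ∈ As (k+1) := hAAs (k+1) hx1
    rw [hAsSucc] at hx'
    apply hx'.2
    exact Set.mem_biUnion (Finset.mem_Ico.mpr ⟨hj1, hj2⟩) ⟨hAAs k hx1, hAAs k hx2⟩
  -- measure estimate
  have hdiffsub : ∀ k, As k \ As (k+1) ⊆ Bad k (As k) := by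
    intro k x hx
    rw [hAsSucc] at hx
    by_contra hxB
    exact hx.2 ⟨hx.1, hxB⟩
  have hcover : Astar \ A ⊆ ⋃ k, As k \ As (k+1) := by
    intro x hx
    by_contra hxU
    have hall : ∀ k, x ∈ As k := by
      intro k
      induction k with
      | zero => exact hx.1
      | succ k ih =>
        by_contra hk1
        exact hxU (Set.mem_iUnion.mpr ⟨k, ih, hk1⟩)
    exact hx.2 (Set.mem_iInter.mpr hall)
  have hhalfofReal : ENNReal.ofReal (ε/4) * 2 = ENNReal.ofReal (ε/2) := by
    rw [show (ε/2 : ℝ) = (ε/4) * 2 by ring, ENNReal.ofReal_mul hε4.le, ENNReal.ofReal_ofNat]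
  have hsum : μ (Astar \ A) ≤ ENNReal.ofReal (ε/2) := by
    refine (measure_mono hcover).trans ((measure_iUnion_le _).trans ?_)
    have h1 : ∀ k, μ (As k \ As (k+1)) ≤ ENNReal.ofReal (ε/4) * 2⁻¹ ^ k := by
      intro k
      refine ((measure_mono (hdiffsub k)).trans (hBadlt k).le).trans ?_
      rw [ENNReal.ofReal_mul hε4.le, ENNReal.ofReal_pow (by norm_num)]
      have h2 : ENNReal.ofReal (1/2 : ℝ) = 2⁻¹ := by
        rw [one_div, ENNReal.ofReal_inv_of_pos two_pos, ENNReal.ofReal_ofNat]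
      rw [h2]
    calc ∑' k, μ (As k \ As (k+1)) ≤ ∑' k : ℕ, ENNReal.ofReal (ε/4) * 2⁻¹ ^ k :=
          ENNReal.tsum_le_tsum h1
      _ = ENNReal.ofReal (ε/4) * (1 - 2⁻¹)⁻¹ := by
          rw [ENNReal.tsum_mul_left, ENNReal.tsum_geometric]
      _ = ENNReal.ofReal (ε/4) * 2 := by rw [ENNReal.one_sub_inv_two, inv_inv]
      _ = ENNReal.ofReal (ε/2) := hhalfofReal
  have hAfin : μ A ≠ ⊤ := ((measure_mono hAsub).trans_lt hfin).ne
  have hdfin : μ (Astar \ A) ≠ ⊤ := (hsum.trans_lt ENNReal.ofReal_lt_top).ne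
  have hsplitμ : μ Astar ≤ μ A + μ (Astar \ A) := by
    conv_lhs => rw [← Set.union_diff_cancel hAsub]
    exact measure_union_le _ _
  have htR : (μ Astar).toReal ≤ (μ A).toReal + (μ (Astar \ A)).toReal := by
    calc (μ Astar).toReal ≤ ((μ A) + μ (Astar \ A)).toReal :=
          ENNReal.toReal_mono (ENNReal.add_ne_top.mpr ⟨hAfin, hdfin⟩) hsplitμ
      _ = _ := ENNReal.toReal_add hAfin hdfin
  have hhalf : (μ (Astar \ A)).toReal ≤ ε/2 :=
    ENNReal.toReal_le_of_le_ofReal (by linarith) hsum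
  refine ⟨A, hAsub, hAmeas, by linarith, ?_⟩
  -- non-syndeticity
  rintro ⟨N, hN0, hsyn⟩
  set k := N.toNat with hk
  have hNk : (k : ℤ) = N := Int.toNat_of_nonneg hN0.le
  obtain ⟨c, hcC, hc⟩ := hsyn (F k (As k) : ℤ)
  rw [Set.mem_Ico] at hc
  have hc0 : (0:ℤ) ≤ c := le_trans (Int.natCast_nonneg _) hc.1
  set j := c.toNat with hj
  have hcj : (j : ℤ) = c := Int.toNat_of_nonneg hc0
  have hj1 : F k (As k) ≤ j := by
    have h := hc.1
    rw [← hcj] at h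
    exact_mod_cast h
  have hj2 : j < F k (As k) + (k+1) := by
    have h := hc.2
    rw [← hcj, ← hNk] at h
    have : j < F k (As k) + k := by exact_mod_cast h
    omega
  have hempty := hgap k j hj1 hj2
  have him : ⇑(e ^ c) '' A ∩ A = (⇑e)^[j] '' (A ∩ (⇑e)^[j] ⁻¹' A) := by
    rw [← hcj, zpow_natCast, ← Equiv.Perm.iterate_eq_pow, Set.image_inter_preimage]
  rw [Set.mem_setOf_eq, him, hempty, Set.image_empty, measure_empty] at hcC
  exact lt_irrefl 0 hcC
end

section
/- Let T : X → X and S : Y → Y be measure-preserving transformations of σ-finite measure spaces, and suppose both T and S are partially rigid with constants α, β > 0 along a common increasing sequence (n_i) of positive integers. Then T × S is partially rigid with constant αβ along (n_i); in particular T × S is conservative. -/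
open MeasureTheory Filter

section AuxLemmas

variable {Z : Type*} [MeasurableSpace Z] {m : Measure Z}

lemma aux_mp_pow (e : Equiv.Perm Z) (h : MeasurePreserving ⇑e m m) (k : ℕ) :
    MeasurePreserving ⇑(e ^ k) m m := by
  induction k with
  | zero => simpa using MeasurePreserving.id m
  | succ k ih =>
    rw [pow_succ, Equiv.Perm.coe_mul]
    exact ih.comp h

lemma aux_symm_pow (e : Equiv.Perm Z) (k : ℕ) : (e ^ k).symm = e.symm ^ k := by
  simp [← Equiv.Perm.inv_def, ← inv_pow]

lemma aux_image_pow (e : Equiv.Perm Z) (h' : MeasurePreserving ⇑e.symm m m) (k : ℕ)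
    {W : Set Z} (hW : MeasurableSet W) : m (⇑(e ^ k) '' W) = m W := by
  rw [Equiv.image_eq_preimage_symm, aux_symm_pow]
  exact (aux_mp_pow e.symm h' k).measure_preimage hW.nullMeasurableSet

lemma aux_meas_image_pow (e : Equiv.Perm Z) (h' : MeasurePreserving ⇑e.symm m m) (k : ℕ)
    {W : Set Z} (hW : MeasurableSet W) : MeasurableSet (⇑(e ^ k) '' W) := by
  rw [Equiv.image_eq_preimage_symm, aux_symm_pow]
  exact (aux_mp_pow e.symm h' k).measurable hW

lemma aux_prodCongr_pow {X Y : Type*} (T : Equiv.Perm X) (S : Equiv.Perm Y) (k : ℕ) :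
    (T.prodCongr S) ^ k = (T ^ k).prodCongr (S ^ k) := by
  induction k with
  | zero =>
    apply Equiv.ext
    intro z
    simp [Equiv.prodCongr_apply]
  | succ k ih =>
    rw [pow_succ, pow_succ, pow_succ, ih]
    apply Equiv.ext
    intro z
    rfl

lemma aux_image_prodCongr {X Y : Type*} (e : Equiv.Perm X) (f : Equiv.Perm Y)
    (A : Set X) (B : Set Y) :
    ⇑(e.prodCongr f) '' (A ×ˢ B) = (⇑e '' A) ×ˢ (⇑f '' B) := by
  rw [Set.prod_image_image_eq]
  rfl

lemma aux_le_liminf_add (u v : ℕ → ENNReal) :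
    liminf u atTop + liminf v atTop ≤ liminf (fun i => u i + v i) atTop := by
  rw [liminf_eq_iSup_iInf_of_nat, liminf_eq_iSup_iInf_of_nat, liminf_eq_iSup_iInf_of_nat]
  have hmono : ∀ w : ℕ → ENNReal, Monotone (fun n => ⨅ i ≥ n, w i) :=
    fun w n m hnm => le_iInf₂ fun i hi => iInf₂_le i (hnm.trans hi)
  rw [ENNReal.iSup_add_iSup_of_monotone (hmono u) (hmono v)]
  exact iSup_mono fun n => le_iInf₂ fun i hi => add_le_add (iInf₂_le i hi) (iInf₂_le i hi)

lemma aux_sum_liminf {κ : Type*} (I : Finset κ) (g : κ → ℕ → ENNReal) :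
    ∑ p ∈ I, liminf (g p) atTop ≤ liminf (fun i => ∑ p ∈ I, g p i) atTop := by
  classical
  induction I using Finset.induction_on with
  | empty => simp
  | @insert a s ha ih =>
    rw [Finset.sum_insert ha]
    have he : (fun i => ∑ p ∈ insert a s, g p i) = fun i => g a i + ∑ p ∈ s, g p i :=
      funext fun i => Finset.sum_insert ha
    rw [he]
    exact le_trans (add_le_add_right ih _) (aux_le_liminf_add _ _)

end AuxLemmas

theorem product_partially_rigid_and_conservative
    {X Y : Type*} [MeasurableSpace X] [MeasurableSpace Y]
    (μ : Measure X) (ν : Measure Y) [SigmaFinite μ] [SigmaFinite ν]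
    (T : Equiv.Perm X) (S : Equiv.Perm Y)
    (hT : MeasurePreserving T μ μ) (hT' : MeasurePreserving T.symm μ μ)
    (hS : MeasurePreserving S ν ν) (hS' : MeasurePreserving S.symm ν ν)
    (α β : ENNReal) (hα : 0 < α) (hβ : 0 < β)
    (n : ℕ → ℕ) (hn : StrictMono n) (hnpos : ∀ i, 0 < n i)
    (hTrig : ∀ A : Set X, MeasurableSet A → 0 < μ A → μ A < ⊤ →
      α * μ A ≤ liminf (fun i => μ (⇑(T ^ n i) '' A ∩ A)) atTop)
    (hSrig : ∀ B : Set Y, MeasurableSet B → 0 < ν B → ν B < ⊤ →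
      β * ν B ≤ liminf (fun i => ν (⇑(S ^ n i) '' B ∩ B)) atTop) :
    (∀ E : Set (X × Y), MeasurableSet E → 0 < (μ.prod ν) E → (μ.prod ν) E < ⊤ →
      α * β * (μ.prod ν) E ≤
        liminf (fun i => (μ.prod ν) (⇑((T.prodCongr S) ^ n i) '' E ∩ E)) atTop) ∧
    (∀ B : Set (X × Y), MeasurableSet B → 0 < (μ.prod ν) B →
      ∃ m : ℕ, 0 < m ∧ 0 < (μ.prod ν) (⇑((T.prodCongr S) ^ m) '' B ∩ B)) := by
  classical
  set P := μ.prod ν with hP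
  by_cases hdeg : P Set.univ = 0
  · constructor
    · intro E _ hpos _
      exact absurd ((measure_mono (Set.subset_univ E)).trans hdeg.le) (not_le.mpr hpos)
    · intro B _ hpos
      exact absurd ((measure_mono (Set.subset_univ B)).trans hdeg.le) (not_le.mpr hpos)
  -- non-degenerate case
  have hPuniv : P Set.univ = μ Set.univ * ν Set.univ := by
    rw [hP, ← Set.univ_prod_univ, Measure.prod_prod]
  have hμ0 : μ Set.univ ≠ 0 := by
    intro h; exact hdeg (by rw [hPuniv, h, zero_mul])
  have hν0 : ν Set.univ ≠ 0 := by
    intro h; exact hdeg (by rw [hPuniv, h, mul_zero])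
  have hexA : ∃ A : Set X, MeasurableSet A ∧ 0 < μ A ∧ μ A < ⊤ := by
    have : ∃ k, μ (spanningSets μ k) ≠ 0 := by
      by_contra hc
      push_neg at hc
      exact hμ0 (by rw [← iUnion_spanningSets μ]; exact measure_iUnion_null hc)
    obtain ⟨k, hk⟩ := this
    exact ⟨_, measurableSet_spanningSets μ k, pos_iff_ne_zero.mpr hk,
      measure_spanningSets_lt_top μ k⟩
  have hexB : ∃ B : Set Y, MeasurableSet B ∧ 0 < ν B ∧ ν B < ⊤ := by
    have : ∃ k, ν (spanningSets ν k) ≠ 0 := by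
      by_contra hc
      push_neg at hc
      exact hν0 (by rw [← iUnion_spanningSets ν]; exact measure_iUnion_null hc)
    obtain ⟨k, hk⟩ := this
    exact ⟨_, measurableSet_spanningSets ν k, pos_iff_ne_zero.mpr hk,
      measure_spanningSets_lt_top ν k⟩
  have hα1 : α ≤ 1 := by
    obtain ⟨A, hAm, hA0, hAt⟩ := hexA
    have h1 := hTrig A hAm hA0 hAt
    have h2 : liminf (fun i => μ (⇑(T ^ n i) '' A ∩ A)) atTop ≤ μ A :=
      liminf_le_of_frequently_le'
        (Frequently.of_forall fun i => measure_mono Set.inter_subset_right)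
    have h3 : α * μ A ≤ 1 * μ A := by rw [one_mul]; exact h1.trans h2
    exact (ENNReal.mul_le_mul_iff_left hA0.ne' hAt.ne).mp h3
  have hβ1 : β ≤ 1 := by
    obtain ⟨B, hBm, hB0, hBt⟩ := hexB
    have h1 := hSrig B hBm hB0 hBt
    have h2 : liminf (fun i => ν (⇑(S ^ n i) '' B ∩ B)) atTop ≤ ν B :=
      liminf_le_of_frequently_le'
        (Frequently.of_forall fun i => measure_mono Set.inter_subset_right)
    have h3 : β * ν B ≤ 1 * ν B := by rw [one_mul]; exact h1.trans h2
    exact (ENNReal.mul_le_mul_iff_left hB0.ne' hBt.ne).mp h3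
  have hαβ : α * β ≤ 1 := by
    calc α * β ≤ 1 * 1 := mul_le_mul' hα1 hβ1
      _ = 1 := one_mul 1
  -- measure preservation of the product map
  have hRmp' : MeasurePreserving ⇑(T.prodCongr S).symm P P := by
    have h1 : (T.prodCongr S).symm = T.symm.prodCongr S.symm := by
      apply Equiv.ext; intro z; rfl
    have h2 : ⇑(T.symm.prodCongr S.symm) = Prod.map ⇑T.symm ⇑S.symm := rfl
    rw [h1, h2, hP]
    exact hT'.prod hS'
  have key_eqm : ∀ (k : ℕ) {W : Set (X × Y)}, MeasurableSet W →
      P (⇑((T.prodCongr S) ^ k) '' W) = P W := fun k _ hW =>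
    aux_image_pow (T.prodCongr S) hRmp' k hW
  have key_meas : ∀ (k : ℕ) {W : Set (X × Y)}, MeasurableSet W →
      MeasurableSet (⇑((T.prodCongr S) ^ k) '' W) := fun k _ hW =>
    aux_meas_image_pow (T.prodCongr S) hRmp' k hW
  have himg : ∀ (k : ℕ) (A : Set X) (B : Set Y),
      ⇑((T.prodCongr S) ^ k) '' (A ×ˢ B) = (⇑(T ^ k) '' A) ×ˢ (⇑(S ^ k) '' B) := by
    intro k A B
    rw [aux_prodCongr_pow, aux_image_prodCongr]
  -- the rectangle estimate
  have grect : ∀ (A : Set X) (B : Set Y), MeasurableSet A → MeasurableSet B →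
      P (A ×ˢ B) < ⊤ →
      α * β * P (A ×ˢ B) ≤
        liminf (fun i => P (⇑((T.prodCongr S) ^ n i) '' (A ×ˢ B) ∩ (A ×ˢ B))) atTop := by
    intro A B hA hB hfin
    have hPr : P (A ×ˢ B) = μ A * ν B := by rw [hP]; exact Measure.prod_prod _ _
    by_cases h0 : μ A * ν B = 0
    · rw [hPr, h0, mul_zero]
      exact zero_le
    · have hA0 : μ A ≠ 0 := fun h => h0 (by rw [h, zero_mul])
      have hB0 : ν B ≠ 0 := fun h => h0 (by rw [h, mul_zero])
      have htop : μ A * ν B ≠ ⊤ := by rw [← hPr]; exact hfin.ne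
      have hAt : μ A < ⊤ := ENNReal.lt_top_of_mul_ne_top_left htop hB0
      have hBt : ν B < ⊤ := ENNReal.lt_top_of_mul_ne_top_right htop hA0
      have e1 : (fun i => P (⇑((T.prodCongr S) ^ n i) '' (A ×ˢ B) ∩ (A ×ˢ B))) =
          fun i => μ (⇑(T ^ n i) '' A ∩ A) * ν (⇑(S ^ n i) '' B ∩ B) := by
        funext i
        rw [himg, Set.prod_inter_prod, hP, Measure.prod_prod]
      rw [e1, hPr]
      calc α * β * (μ A * ν B) = (α * μ A) * (β * ν B) := by ring
        _ ≤ liminf (fun i => μ (⇑(T ^ n i) '' A ∩ A)) atTop *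
            liminf (fun i => ν (⇑(S ^ n i) '' B ∩ B)) atTop :=
          mul_le_mul' (hTrig A hA (pos_iff_ne_zero.mpr hA0) hAt)
            (hSrig B hB (pos_iff_ne_zero.mpr hB0) hBt)
        _ ≤ liminf (fun i => μ (⇑(T ^ n i) '' A ∩ A) * ν (⇑(S ^ n i) '' B ∩ B)) atTop :=
          ENNReal.le_liminf_mul
  -- the family of finite disjoint unions of measurable rectangles
  set 𝒟 : Set (Set (X × Y)) := {s | ∃ I : Finset (Set X × Set Y),
    (∀ p ∈ I, MeasurableSet p.1 ∧ MeasurableSet p.2) ∧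
    ((I : Set (Set X × Set Y)).PairwiseDisjoint fun p => p.1 ×ˢ p.2) ∧
    s = ⋃ p ∈ I, p.1 ×ˢ p.2} with h𝒟
  have hrect_mem : ∀ (A : Set X) (B : Set Y), MeasurableSet A → MeasurableSet B →
      (A ×ˢ B) ∈ 𝒟 := by
    intro A B hA hB
    refine ⟨{(A, B)}, ?_, ?_, ?_⟩
    · intro p hp
      rw [Finset.mem_singleton] at hp
      subst hp
      exact ⟨hA, hB⟩
    · simp
    · simp
  have hmeas𝒟 : ∀ s ∈ 𝒟, MeasurableSet s := by
    rintro s ⟨I, hmeas, -, rfl⟩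
    exact MeasurableSet.biUnion I.countable_toSet
      fun p hp => ((hmeas p hp).1.prod (hmeas p hp).2)
  have hinter : ∀ s ∈ 𝒟, ∀ t ∈ 𝒟, s ∩ t ∈ 𝒟 := by
    rintro s ⟨I, hImeas, hIdisj, rfl⟩ t ⟨J, hJmeas, hJdisj, rfl⟩
    refine ⟨(I ×ˢ J).image fun q => (q.1.1 ∩ q.2.1, q.1.2 ∩ q.2.2), ?_, ?_, ?_⟩
    · intro p hp
      simp only [Finset.mem_image, Finset.mem_product] at hp
      obtain ⟨⟨u, v⟩, ⟨hu, hv⟩, rfl⟩ := hp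
      exact ⟨(hImeas u hu).1.inter (hJmeas v hv).1, (hImeas u hu).2.inter (hJmeas v hv).2⟩
    · intro p hp q hq hpq
      rw [Finset.mem_coe, Finset.mem_image] at hp hq
      obtain ⟨⟨u, v⟩, huv, rfl⟩ := hp
      obtain ⟨⟨u', v'⟩, huv', rfl⟩ := hq
      rw [Finset.mem_product] at huv huv'
      have hne : u ≠ u' ∨ v ≠ v' := by
        by_contra hc
        push_neg at hc
        exact hpq (by rw [hc.1, hc.2])
      rcases hne with h | h
      · exact Disjoint.mono
          (Set.prod_mono Set.inter_subset_left Set.inter_subset_left)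
          (Set.prod_mono Set.inter_subset_left Set.inter_subset_left)
          (hIdisj (Finset.mem_coe.mpr huv.1) (Finset.mem_coe.mpr huv'.1) h)
      · exact Disjoint.mono
          (Set.prod_mono Set.inter_subset_right Set.inter_subset_right)
          (Set.prod_mono Set.inter_subset_right Set.inter_subset_right)
          (hJdisj (Finset.mem_coe.mpr huv.2) (Finset.mem_coe.mpr huv'.2) h)
    · ext z
      simp only [Set.mem_inter_iff, Set.mem_iUnion, exists_prop, Finset.mem_image,
        Finset.mem_product, Set.mem_prod]
      constructor
      · rintro ⟨⟨u, hu, hzu⟩, ⟨v, hv, hzv⟩⟩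
        exact ⟨(u.1 ∩ v.1, u.2 ∩ v.2), ⟨⟨u, v⟩, ⟨hu, hv⟩, rfl⟩,
          ⟨⟨hzu.1, hzv.1⟩, ⟨hzu.2, hzv.2⟩⟩⟩
      · rintro ⟨p, ⟨⟨u, v⟩, ⟨hu, hv⟩, rfl⟩, hz⟩
        exact ⟨⟨u, hu, hz.1.1, hz.2.1⟩, ⟨v, hv, hz.1.2, hz.2.2⟩⟩
  have hcomplrect : ∀ (A : Set X) (B : Set Y), MeasurableSet A → MeasurableSet B →
      (A ×ˢ B)ᶜ ∈ 𝒟 := by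
    intro A B hA hB
    refine ⟨{(Aᶜ, Set.univ), (A, Bᶜ)}, ?_, ?_, ?_⟩
    · intro p hp
      simp only [Finset.mem_insert, Finset.mem_singleton] at hp
      rcases hp with rfl | rfl
      · exact ⟨hA.compl, MeasurableSet.univ⟩
      · exact ⟨hA, hB.compl⟩
    · have hd : Disjoint ((Aᶜ : Set X) ×ˢ (Set.univ : Set Y)) (A ×ˢ Bᶜ) := by
        rw [Set.disjoint_left]
        rintro ⟨z1, z2⟩ hz1 hz2
        exact hz1.1 hz2.1
      intro p hp q hq hpq
      simp only [Finset.coe_insert, Finset.coe_singleton, Set.mem_insert_iff,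
        Set.mem_singleton_iff] at hp hq
      rcases hp with rfl | rfl <;> rcases hq with rfl | rfl
      · exact absurd rfl hpq
      · exact hd
      · exact hd.symm
      · exact absurd rfl hpq
    · ext ⟨z1, z2⟩
      simp only [Set.mem_compl_iff, Set.mem_prod, Set.mem_iUnion, exists_prop,
        Finset.mem_insert, Finset.mem_singleton, Set.mem_univ]
      constructor
      · intro h
        by_cases h1 : z1 ∈ A
        · exact ⟨(A, Bᶜ), Or.inr rfl, h1, fun hb => h ⟨h1, hb⟩⟩
        · exact ⟨(Aᶜ, Set.univ), Or.inl rfl, h1, trivial⟩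
      · rintro ⟨p, hp, hz⟩ hAB
        rcases hp with rfl | rfl
        · exact hz.1 hAB.1
        · exact hz.2 hAB.2
  have hunivmem : (Set.univ : Set (X × Y)) ∈ 𝒟 := by
    have := hrect_mem Set.univ Set.univ MeasurableSet.univ MeasurableSet.univ
    rwa [Set.univ_prod_univ] at this
  have hcompl_aux : ∀ I : Finset (Set X × Set Y),
      (∀ p ∈ I, MeasurableSet p.1 ∧ MeasurableSet p.2) →
      ((I : Set (Set X × Set Y)).PairwiseDisjoint fun p => p.1 ×ˢ p.2) →
      (⋃ p ∈ I, p.1 ×ˢ p.2)ᶜ ∈ 𝒟 := by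
    intro I
    induction I using Finset.induction_on with
    | empty =>
      intro _ _
      simpa using hunivmem
    | @insert a s' ha ih =>
      intro hmeas hdisj
      have hsub_meas : ∀ p ∈ s', MeasurableSet p.1 ∧ MeasurableSet p.2 :=
        fun p hp => hmeas p (Finset.mem_insert_of_mem hp)
      have hsub_disj : ((s' : Set (Set X × Set Y)).PairwiseDisjoint
          fun p => p.1 ×ˢ p.2) :=
        hdisj.subset (Finset.coe_subset.mpr (Finset.subset_insert a s'))
      have h1 : (⋃ p ∈ insert a s', p.1 ×ˢ p.2)ᶜ
          = (a.1 ×ˢ a.2)ᶜ ∩ (⋃ p ∈ s', p.1 ×ˢ p.2)ᶜ := by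
        rw [Finset.set_biUnion_insert, Set.compl_union]
      rw [h1]
      exact hinter _ (hcomplrect a.1 a.2 (hmeas a (Finset.mem_insert_self a s')).1
        (hmeas a (Finset.mem_insert_self a s')).2) _ (ih hsub_meas hsub_disj)
  have hcompl : ∀ s ∈ 𝒟, sᶜ ∈ 𝒟 := by
    rintro s ⟨I, hImeas, hIdisj, rfl⟩
    exact hcompl_aux I hImeas hIdisj
  have halg : IsSetAlgebra 𝒟 :=
    { empty_mem := ⟨∅, by simp, by simp, by simp⟩
      compl_mem := fun s hs => hcompl s hs
      union_mem := fun {s t} hs ht => by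
        rw [← compl_compl (s ∪ t), Set.compl_union]
        exact hcompl _ (hinter _ (hcompl s hs) _ (hcompl t ht)) }
  have hgen : (Prod.instMeasurableSpace : MeasurableSpace (X × Y)) =
      MeasurableSpace.generateFrom 𝒟 := by
    apply le_antisymm
    · rw [← generateFrom_prod]
      apply MeasurableSpace.generateFrom_mono
      rintro _ ⟨A, hA, B, hB, rfl⟩
      exact hrect_mem A B hA hB
    · exact MeasurableSpace.generateFrom_le fun s hs => hmeas𝒟 s hs
  have hspan : P.FiniteSpanningSetsIn 𝒟 :=
    { set := fun k => spanningSets μ k ×ˢ spanningSets ν k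
      set_mem := fun k => hrect_mem _ _ (measurableSet_spanningSets μ k)
        (measurableSet_spanningSets ν k)
      finite := fun k => by
        rw [hP, Measure.prod_prod]
        exact ENNReal.mul_lt_top (measure_spanningSets_lt_top μ k)
          (measure_spanningSets_lt_top ν k)
      spanning := by
        rw [Set.iUnion_prod_of_monotone (monotone_spanningSets μ) (monotone_spanningSets ν),
          iUnion_spanningSets, iUnion_spanningSets, Set.univ_prod_univ] }
  have hdense := Measure.MeasureDense.of_generateFrom_isSetAlgebra_sigmaFinite halg hspan hgen
  -- Good sets
  have good : ∀ t ∈ 𝒟, P t ≠ ⊤ →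
      α * β * P t ≤ liminf (fun i => P (⇑((T.prodCongr S) ^ n i) '' t ∩ t)) atTop := by
    rintro t ⟨I, hImeas, hIdisj, rfl⟩ hfin
    have hrect_sub : ∀ p ∈ I, p.1 ×ˢ p.2 ⊆ ⋃ q ∈ I, q.1 ×ˢ q.2 :=
      fun p hp z hz => Set.mem_biUnion hp hz
    have hrect_fin : ∀ p ∈ I, P (p.1 ×ˢ p.2) < ⊤ :=
      fun p hp => lt_of_le_of_lt (measure_mono (hrect_sub p hp)) hfin.lt_top
    have hrect_measP : ∀ p ∈ I, MeasurableSet (p.1 ×ˢ p.2) :=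
      fun p hp => (hImeas p hp).1.prod (hImeas p hp).2
    have pointwise : ∀ i,
        ∑ p ∈ I, P (⇑((T.prodCongr S) ^ n i) '' (p.1 ×ˢ p.2) ∩ (p.1 ×ˢ p.2)) ≤
          P (⇑((T.prodCongr S) ^ n i) '' (⋃ q ∈ I, q.1 ×ˢ q.2) ∩ ⋃ q ∈ I, q.1 ×ˢ q.2) := by
      intro i
      have hdisj' : ((I : Set (Set X × Set Y)).PairwiseDisjoint
          fun p => ⇑((T.prodCongr S) ^ n i) '' (p.1 ×ˢ p.2) ∩ (p.1 ×ˢ p.2)) :=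
        fun p hp q hq hpq =>
          (hIdisj hp hq hpq).mono Set.inter_subset_right Set.inter_subset_right
      have hmeas' : ∀ p ∈ I,
          MeasurableSet (⇑((T.prodCongr S) ^ n i) '' (p.1 ×ˢ p.2) ∩ (p.1 ×ˢ p.2)) :=
        fun p hp => (key_meas _ (hrect_measP p hp)).inter (hrect_measP p hp)
      rw [← measure_biUnion_finset hdisj' hmeas']
      apply measure_mono
      apply Set.iUnion₂_subset
      intro p hp
      exact Set.inter_subset_inter (Set.image_mono (hrect_sub p hp)) (hrect_sub p hp)
    calc α * β * P (⋃ p ∈ I, p.1 ×ˢ p.2)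
        ≤ α * β * ∑ p ∈ I, P (p.1 ×ˢ p.2) :=
          mul_le_mul_right (measure_biUnion_finset_le I _) _
      _ = ∑ p ∈ I, α * β * P (p.1 ×ˢ p.2) := Finset.mul_sum _ _ _
      _ ≤ ∑ p ∈ I, liminf
            (fun i => P (⇑((T.prodCongr S) ^ n i) '' (p.1 ×ˢ p.2) ∩ (p.1 ×ˢ p.2))) atTop :=
          Finset.sum_le_sum fun p hp =>
            grect p.1 p.2 (hImeas p hp).1 (hImeas p hp).2 (hrect_fin p hp)
      _ ≤ liminf (fun i => ∑ p ∈ I,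
            P (⇑((T.prodCongr S) ^ n i) '' (p.1 ×ˢ p.2) ∩ (p.1 ×ˢ p.2))) atTop :=
          aux_sum_liminf I _
      _ ≤ liminf (fun i =>
            P (⇑((T.prodCongr S) ^ n i) '' (⋃ q ∈ I, q.1 ×ˢ q.2) ∩ ⋃ q ∈ I, q.1 ×ˢ q.2))
            atTop :=
          liminf_le_liminf (Eventually.of_forall pointwise)
  -- Part 1
  have part1 : ∀ E : Set (X × Y), MeasurableSet E → 0 < P E → P E < ⊤ →
      α * β * P E ≤ liminf (fun i => P (⇑((T.prodCongr S) ^ n i) '' E ∩ E)) atTop := by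
    intro E hE hE0 hEt
    refine ENNReal.le_of_forall_pos_le_add fun ε hε hlim => ?_
    obtain ⟨t, ht𝒟, htfin, htd⟩ :=
      hdense.fin_meas_approx hE hEt.ne ((ε : ℝ) / 3) (by positivity)
    set d := P (symmDiff E t) with hd
    have htmeas : MeasurableSet t := hmeas𝒟 t ht𝒟
    have b1 : P E ≤ P t + d := by
      refine le_trans (measure_mono ?_) (measure_union_le t (symmDiff E t))
      intro z hz
      by_cases h : z ∈ t
      · exact Or.inl h
      · exact Or.inr (Set.mem_symmDiff.mpr (Or.inl ⟨hz, h⟩))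
    have b2 : ∀ i, P (⇑((T.prodCongr S) ^ n i) '' t ∩ t) ≤
        P (⇑((T.prodCongr S) ^ n i) '' E ∩ E) + (d + d) := by
      intro i
      set f := ⇑((T.prodCongr S) ^ n i) with hf
      have hsub : f '' t ∩ t ⊆ (f '' E ∩ E) ∪ (f '' (t \ E) ∪ (t \ E)) := by
        rintro z ⟨hz1, hz2⟩
        by_cases hzE : z ∈ E
        · obtain ⟨w, hw, rfl⟩ := hz1
          by_cases hwE : w ∈ E
          · exact Or.inl ⟨Set.mem_image_of_mem f hwE, hzE⟩
          · exact Or.inr (Or.inl (Set.mem_image_of_mem f ⟨hw, hwE⟩))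
        · exact Or.inr (Or.inr ⟨hz2, hzE⟩)
      have hdE : P (t \ E) ≤ d :=
        measure_mono fun z hz => Set.mem_symmDiff.mpr (Or.inr ⟨hz.1, hz.2⟩)
      calc P (f '' t ∩ t) ≤ P ((f '' E ∩ E) ∪ (f '' (t \ E) ∪ (t \ E))) :=
            measure_mono hsub
        _ ≤ P (f '' E ∩ E) + P (f '' (t \ E) ∪ (t \ E)) := measure_union_le _ _
        _ ≤ P (f '' E ∩ E) + (P (f '' (t \ E)) + P (t \ E)) :=
            add_le_add_right (measure_union_le _ _) _
        _ ≤ P (f '' E ∩ E) + (d + d) := by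
            rw [hf, key_eqm _ (htmeas.diff hE)]
            exact add_le_add_right (add_le_add hdE hdE) _
    have cob : IsCoboundedUnder (· ≥ ·) atTop
        (fun i => P (⇑((T.prodCongr S) ^ n i) '' E ∩ E)) :=
      ⟨⊤, fun a _ => le_top⟩
    have bdd : IsBoundedUnder (· ≥ ·) atTop
        (fun i => P (⇑((T.prodCongr S) ^ n i) '' E ∩ E)) :=
      isBoundedUnder_of ⟨0, fun i => zero_le⟩
    have b3 : liminf (fun i => P (⇑((T.prodCongr S) ^ n i) '' t ∩ t)) atTop ≤
        liminf (fun i => P (⇑((T.prodCongr S) ^ n i) '' E ∩ E)) atTop + (d + d) := by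
      have h : liminf (fun i => P (⇑((T.prodCongr S) ^ n i) '' t ∩ t)) atTop ≤
          liminf (fun i => P (⇑((T.prodCongr S) ^ n i) '' E ∩ E) + (d + d)) atTop :=
        liminf_le_liminf (Eventually.of_forall b2)
      rwa [liminf_add_const atTop _ (d + d) cob bdd] at h
    have hdd : d + d + d ≤ (ε : ENNReal) := by
      have h3 : d ≤ ENNReal.ofReal ((ε : ℝ) / 3) := htd.le
      calc d + d + d ≤ ENNReal.ofReal ((ε : ℝ) / 3) + ENNReal.ofReal ((ε : ℝ) / 3)
            + ENNReal.ofReal ((ε : ℝ) / 3) := by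
            exact add_le_add (add_le_add h3 h3) h3
        _ = ENNReal.ofReal ((ε : ℝ) / 3 + (ε : ℝ) / 3 + (ε : ℝ) / 3) := by
            rw [← ENNReal.ofReal_add (by positivity) (by positivity),
              ← ENNReal.ofReal_add (by positivity) (by positivity)]
        _ = (ε : ENNReal) := by
            rw [show (ε : ℝ) / 3 + (ε : ℝ) / 3 + (ε : ℝ) / 3 = (ε : ℝ) by ring,
              ENNReal.ofReal_coe_nnreal]
    calc α * β * P E ≤ α * β * (P t + d) := mul_le_mul_right b1 _
      _ = α * β * P t + α * β * d := mul_add _ _ _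
      _ ≤ α * β * P t + d := add_le_add_right (by
            calc α * β * d ≤ 1 * d := mul_le_mul_left hαβ d
              _ = d := one_mul d) _
      _ ≤ liminf (fun i => P (⇑((T.prodCongr S) ^ n i) '' t ∩ t)) atTop + d :=
          add_le_add_left (good t ht𝒟 htfin) d
      _ ≤ (liminf (fun i => P (⇑((T.prodCongr S) ^ n i) '' E ∩ E)) atTop + (d + d)) + d :=
          add_le_add_left b3 d
      _ = liminf (fun i => P (⇑((T.prodCongr S) ^ n i) '' E ∩ E)) atTop + (d + d + d) := by
          rw [add_assoc]
      _ ≤ liminf (fun i => P (⇑((T.prodCongr S) ^ n i) '' E ∩ E)) atTop + (ε : ENNReal) :=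
          add_le_add_right hdd _
  refine ⟨part1, ?_⟩
  -- Part 2 : conservativity
  intro B hB hB0
  have : ∃ k, P (B ∩ spanningSets P k) ≠ 0 := by
    by_contra hc
    push_neg at hc
    apply hB0.ne'
    calc P B = P (⋃ k, B ∩ spanningSets P k) := by
          rw [← Set.inter_iUnion, iUnion_spanningSets, Set.inter_univ]
      _ = 0 := measure_iUnion_null hc
  obtain ⟨k, hk⟩ := this
  set E := B ∩ spanningSets P k with hE
  have hEmeas : MeasurableSet E := hB.inter (measurableSet_spanningSets P k)
  have hE0 : 0 < P E := pos_iff_ne_zero.mpr hk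
  have hEt : P E < ⊤ :=
    lt_of_le_of_lt (measure_mono Set.inter_subset_right) (measure_spanningSets_lt_top P k)
  have h1 := part1 E hEmeas hE0 hEt
  have h2 : 0 < liminf (fun i => P (⇑((T.prodCongr S) ^ n i) '' E ∩ E)) atTop :=
    lt_of_lt_of_le (ENNReal.mul_pos (mul_ne_zero hα.ne' hβ.ne') hE0.ne') h1
  have h3 : ∃ i, 0 < P (⇑((T.prodCongr S) ^ n i) '' E ∩ E) := by
    by_contra hc
    push_neg at hc
    have hzero : (fun i => P (⇑((T.prodCongr S) ^ n i) '' E ∩ E)) = fun _ => 0 :=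
      funext fun i => le_antisymm (hc i) zero_le
    rw [hzero, liminf_const] at h2
    exact lt_irrefl 0 h2
  obtain ⟨i, hi⟩ := h3
  exact ⟨n i, hnpos i, lt_of_lt_of_le hi (measure_mono
    (Set.inter_subset_inter (Set.image_mono Set.inter_subset_left)
      Set.inter_subset_left))⟩
end

section
/- Let G = ℤ^d and let E = {(c_1 a_1, …, c_d a_d) : c_i ∈ {−1,0,1}} for fixed positive integers a_1, …, a_d. Suppose C ⊆ ℤ^d has adequate gaps w.r.t. a_1, …, a_d: for every n ∈ ℕ there exists ℓ_n ∈ ℕ with (ℓ_n·E ⊕ [−n,n]^d) ∩ C = ∅ where ℓ_n·E = {ℓ_n v : v ∈ E, v ≠ 0}. Assume also 0 ∈ C and C = −C. Then there exists a sequence of positive integers (h_m) with h_{m+1} ≥ 2 h_m such that, setting D_m = ⊕_{k=1}^{m} {(c_1 a_1 h_k, …, c_d a_d h_k) : c_i ∈ {−1,0,1}}, one has C ∩ D_m = {0} for all m. -/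
/-- `E a = {(c 1 * a 1, …, c d * a d) : c i ∈ {-1,0,1}}` in `ℤ^d`. -/
def cubeE {d : ℕ} (a : Fin d → ℤ) : Set (Fin d → ℤ) :=
  {v | ∃ c : Fin d → ℤ, (∀ i, c i ∈ ({-1, 0, 1} : Set ℤ)) ∧ v = fun i => c i * a i}

/-- `D a h m` is the iterated sumset
`⊕_{k=1}^{m} {(c 1 * a 1 * h k, …, c d * a d * h k) : c i ∈ {-1,0,1}}`. -/
def gridD {d : ℕ} (a : Fin d → ℤ) (h : ℕ → ℤ) (m : ℕ) : Set (Fin d → ℤ) :=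
  {v | ∃ c : ℕ → Fin d → ℤ, (∀ k i, c k i ∈ ({-1, 0, 1} : Set ℤ)) ∧
    v = fun i => ∑ k ∈ Finset.Icc 1 m, c k i * a i * h k}

theorem exists_skyscraper_heights_avoiding_Zd
    {d : ℕ} (hd : 0 < d) (a : Fin d → ℤ) (hapos : ∀ i, 0 < a i)
    (C : Set (Fin d → ℤ)) (h0 : (0 : Fin d → ℤ) ∈ C) (hsym : ∀ v ∈ C, -v ∈ C)
    (hgaps : ∀ n : ℕ, ∃ ℓ : ℕ,
      ∀ v ∈ cubeE a, v ≠ 0 → ∀ w : Fin d → ℤ, (∀ i, |w i| ≤ (n : ℤ)) →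
        (fun i => (ℓ : ℤ) * v i + w i) ∉ C) :
    ∃ h : ℕ → ℤ, (∀ k, 0 < h k) ∧ (∀ k, 2 * h k ≤ h (k + 1)) ∧
      ∀ m : ℕ, C ∩ gridD a h m = {0} := by
  classical
  have i0 : Fin d := ⟨0, hd⟩
  set Amax : ℕ := Finset.univ.sup (fun i => (a i).toNat) with hAmax
  have haA : ∀ i, (a i : ℤ) ≤ (Amax : ℤ) := by
    intro i
    have h1 : (a i).toNat ≤ Amax :=
      Finset.le_sup (f := fun i => (a i).toNat) (Finset.mem_univ i)
    omega
  have hA1 : 1 ≤ Amax := by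
    have h1 := haA i0
    have h2 := hapos i0
    omega
  choose f hf using hgaps
  -- the gap parameter must exceed n / Amax
  have fgt : ∀ n : ℕ, n < f n * Amax := by
    intro n
    by_contra hle
    push_neg at hle
    set c0 : Fin d → ℤ := fun i => if i = i0 then 1 else 0 with hc0
    set v : Fin d → ℤ := fun i => c0 i * a i with hv
    have hvE : v ∈ cubeE a := ⟨c0, fun i => by by_cases h : i = i0 <;> simp [hc0, h], rfl⟩
    have hvne : v ≠ 0 := by
      intro h
      have := congrFun h i0
      simp [hv, hc0] at this
      exact absurd this (hapos i0).ne'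
    have hw : ∀ i, |(-(f n : ℤ)) * v i| ≤ (n : ℤ) := by
      intro i
      have hvb : |v i| ≤ (Amax : ℤ) := by
        by_cases h : i = i0
        · subst h
          have hvi : v i = a i := by simp [hv, hc0]
          rw [hvi, abs_of_pos (hapos i)]
          exact haA i
        · simp [hv, hc0, h]
      have hfA : ((f n : ℤ)) * Amax ≤ (n : ℤ) := by exact_mod_cast hle
      calc |(-(f n : ℤ)) * v i| = (f n : ℤ) * |v i| := by
            rw [abs_mul, abs_neg, Nat.abs_cast]
        _ ≤ (f n : ℤ) * Amax := by
            apply mul_le_mul_of_nonneg_left hvb (by positivity)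
        _ ≤ (n : ℤ) := hfA
    have hnot := hf n v hvE hvne (fun i => -(f n : ℤ) * v i) hw
    apply hnot
    have : (fun i => (f n : ℤ) * v i + (-(f n : ℤ)) * v i) = (0 : Fin d → ℤ) := by
      funext i; ring_nf; rfl
    rw [this]
    exact h0
  have key : ∀ x : ℕ, x < f (Amax * x) := by
    intro x
    have h2 : Amax * x < Amax * f (Amax * x) := by
      calc Amax * x < f (Amax * x) * Amax := fgt (Amax * x)
        _ = Amax * f (Amax * x) := mul_comm _ _
    exact Nat.lt_of_mul_lt_mul_left h2
  -- recursive construction of heights together with their running sums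
  set step : ℕ × ℕ → ℕ × ℕ := fun p =>
    (f (Amax * (2 * p.1 + p.2 + 1)), p.2 + f (Amax * (2 * p.1 + p.2 + 1))) with hstepdef
  set P : ℕ → ℕ × ℕ := fun k => step^[k] (1, 0) with hPdef
  have hP0 : P 0 = (1, 0) := rfl
  have hPsucc : ∀ k, P (k + 1) = step (P k) := by
    intro k
    simp only [hPdef]
    exact Function.iterate_succ_apply' step k (1, 0)
  have Hstep : ∀ k, 2 * (P k).1 + (P k).2 + 1 < (P (k + 1)).1 := by
    intro k
    rw [hPsucc k]
    exact key _
  have Hpos : ∀ k, 0 < (P k).1 := by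
    intro k
    cases k with
    | zero => simp [hP0]
    | succ n => have := Hstep n; omega
  have Ssum : ∀ k, ((P k).2) = ∑ j ∈ Finset.Ioc 0 k, (P j).1 := by
    intro k
    induction k with
    | zero => simp [hP0]
    | succ n ih =>
        rw [Finset.sum_Ioc_succ_top (Nat.zero_le n), ← ih, hPsucc n]
  refine ⟨fun k => ((P k).1 : ℤ),
    fun k => show (0:ℤ) < ((P k).1 : ℤ) by exact_mod_cast Hpos k,
    fun k => show 2 * ((P k).1 : ℤ) ≤ ((P (k+1)).1 : ℤ) by
      have := Hstep k; omega, ?_⟩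
  intro m
  ext x
  simp only [Set.mem_inter_iff, Set.mem_singleton_iff, gridD, Set.mem_setOf_eq]
  constructor
  · rintro ⟨hxC, c, hc, rfl⟩
    by_contra hne
    have hI : Finset.Icc 1 m = Finset.Ioc 0 m := by ext j; simp; omega
    set T : Finset ℕ := (Finset.Ioc 0 m).filter (fun k => ∃ i, c k i ≠ 0) with hTdef
    have hT : T.Nonempty := by
      by_contra hT'
      rw [Finset.not_nonempty_iff_eq_empty] at hT'
      apply hne
      funext i
      rw [hI]
      apply Finset.sum_eq_zero
      intro k hk
      have hck : c k i = 0 := by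
        by_contra hck
        have : k ∈ T := by
          rw [hTdef, Finset.mem_filter]
          exact ⟨hk, ⟨i, hck⟩⟩
        rw [hT'] at this
        exact absurd this (Finset.notMem_empty k)
      rw [hck]; ring
    set K : ℕ := T.max' hT with hKdef
    have hKT : K ∈ T := T.max'_mem hT
    rw [hTdef, Finset.mem_filter, Finset.mem_Ioc] at hKT
    obtain ⟨⟨hK0, hKm⟩, j, hj⟩ := hKT
    have hmax : ∀ k, K < k → k ≤ m → ∀ i, c k i = 0 := by
      intro k hKk hkm i
      by_contra hck
      have : k ∈ T := by
        rw [hTdef, Finset.mem_filter, Finset.mem_Ioc]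
        exact ⟨⟨by omega, hkm⟩, ⟨i, hck⟩⟩
      have := Finset.le_max' T k this
      omega
    set h : ℕ → ℤ := fun k => ((P k).1 : ℤ) with hhdef
    set w : Fin d → ℤ := fun i => ∑ k ∈ Finset.Ioc 0 (K - 1), c k i * a i * h k with hwdef
    have hxeq : ∀ i, (∑ k ∈ Finset.Icc 1 m, c k i * a i * h k)
        = h K * (c K i * a i) + w i := by
      intro i
      rw [hI, ← Finset.sum_Ioc_consecutive _ (Nat.zero_le (K - 1)) (show K - 1 ≤ m by omega)]
      have hins : Finset.Ioc (K - 1) m = insert K (Finset.Ioc K m) := by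
        ext j'; simp [Finset.mem_Ioc, Finset.mem_insert]; omega
      rw [hins, Finset.sum_insert (by simp)]
      have hz : ∑ k ∈ Finset.Ioc K m, c k i * a i * h k = 0 := by
        apply Finset.sum_eq_zero
        intro k hk
        rw [Finset.mem_Ioc] at hk
        rw [hmax k hk.1 hk.2 i]
        ring
      rw [hz, hwdef]
      ring
    -- bound the tail
    have hwb : ∀ i, |w i| ≤ (Amax : ℤ) * ((P (K - 1)).2 : ℤ) := by
      intro i
      have hsum : ((P (K - 1)).2 : ℤ) = ∑ k ∈ Finset.Ioc 0 (K - 1), h k := by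
        rw [Ssum (K - 1)]
        push_cast
        rfl
      calc |w i| ≤ ∑ k ∈ Finset.Ioc 0 (K - 1), |c k i * a i * h k| := by
            rw [hwdef]; exact Finset.abs_sum_le_sum_abs _ _
        _ ≤ ∑ k ∈ Finset.Ioc 0 (K - 1), (Amax : ℤ) * h k := by
            apply Finset.sum_le_sum
            intro k _
            have hc1 : |c k i| ≤ 1 := by
              have hm := hc k i
              simp only [Set.mem_insert_iff, Set.mem_singleton_iff] at hm
              rcases hm with h' | h' | h' <;> rw [h'] <;> norm_num
            have hhk : (0:ℤ) < h k := by
              show (0:ℤ) < ((P k).1 : ℤ); exact_mod_cast Hpos k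
            rw [abs_mul, abs_mul, abs_of_pos (hapos i), abs_of_pos hhk]
            calc |c k i| * a i * h k ≤ 1 * a i * h k := by
                  apply mul_le_mul_of_nonneg_right _ hhk.le
                  exact mul_le_mul_of_nonneg_right hc1 (hapos i).le
              _ = a i * h k := by ring
              _ ≤ (Amax : ℤ) * h k := mul_le_mul_of_nonneg_right (haA i) hhk.le
        _ = (Amax : ℤ) * ∑ k ∈ Finset.Ioc 0 (K - 1), h k := by
            rw [Finset.mul_sum]
        _ = (Amax : ℤ) * ((P (K - 1)).2 : ℤ) := by rw [hsum]
    set N' : ℕ := Amax * (2 * (P (K - 1)).1 + (P (K - 1)).2 + 1) with hN'def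
    have hwN : ∀ i, |w i| ≤ (N' : ℤ) := by
      intro i
      have hmono : (Amax : ℤ) * ((P (K - 1)).2 : ℤ) ≤ (N' : ℤ) := by
        rw [hN'def]
        push_cast
        have : ((P (K-1)).2 : ℤ) ≤ 2 * ((P (K-1)).1 : ℤ) + ((P (K-1)).2 : ℤ) + 1 := by
          have := Hpos (K - 1); push_cast; omega
        exact mul_le_mul_of_nonneg_left this (by positivity)
      exact (hwb i).trans hmono
    have hKf : (P K).1 = f N' := by
      have hK1 : K = (K - 1) + 1 := by omega
      rw [hK1, hPsucc (K - 1)]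
    have hvE : (fun i => c K i * a i) ∈ cubeE a := ⟨c K, fun i => hc K i, rfl⟩
    have hvne : (fun i => c K i * a i) ≠ 0 := by
      intro hv0
      have := congrFun hv0 j
      simp only [Pi.zero_apply] at this
      rcases mul_eq_zero.mp this with h' | h'
      · exact hj h'
      · exact (hapos j).ne' h'
    have hnot := hf N' _ hvE hvne w hwN
    apply hnot
    have heq : (fun i => (f N' : ℤ) * (c K i * a i) + w i)
        = (fun i => ∑ k ∈ Finset.Icc 1 m, c k i * a i * h k) := by
      funext i
      rw [hxeq i]
      have : h K = (f N' : ℤ) := by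
        show ((P K).1 : ℤ) = (f N' : ℤ); exact_mod_cast hKf
      rw [this]
    rw [heq]
    exact hxC
  · rintro rfl
    refine ⟨h0, fun _ _ => 0, fun k i => by simp, ?_⟩
    funext i
    simp
end
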